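/- For any poset (X, ≤), each equivalence class of the partially commutative monoid L(X, ≤) contains exactly one maximal word, i.e., exactly one word with empty rise set. -/

import Mathlib

/-- Adjacency in the free monoid over a poset: swap of two adjacent,
distinct and comparable letters. -/
inductive PCM.Adj {X : Type*} [PartialOrder X] : List X → List X → Prop
  | swap (u v : List X) (a b : X) (hne : a ≠ b) (hcomp : a ≤ b ∨ b ≤ a) :
      PCM.Adj (u ++ a :: b :: v) (u ++ b :: a :: v)

/-- Equivalence in the partially commutative monoid `L(X, ≤)`. -/
def PCM.Equiv {X : Type*} [PartialOrder X] (w w' : List X) : Prop :=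
  Relation.ReflTransGen PCM.Adj w w'

/-- The rise set of a word `w = x₁ x₂ ⋯ xₙ` : the set of `i`,
`1 ≤ i ≤ n-1`, with `x_i < x_{i+1}` (0-based: `w[i-1] < w[i]`). -/
def PCM.ASC {X : Type*} [PartialOrder X] (w : List X) : Set ℕ :=
  {i | ∃ h : i < w.length, 0 < i ∧ w[i - 1]'(by omega) < w[i]'h}

open Classical in
/-- Insert a letter into a word, moving it past larger letters. -/
noncomputable def PCM.ins {X : Type*} [PartialOrder X] (x : X) : List X → List X
  | [] => [x]
  | y :: w => if x < y then y :: PCM.ins x w else x :: y :: w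

noncomputable def PCM.nf {X : Type*} [PartialOrder X] (w : List X) : List X :=
  w.foldr PCM.ins []

namespace PCM
variable {X : Type*} [PartialOrder X]

theorem asc_empty_iff (w : List X) :
    ASC w = ∅ ↔ List.Chain' (fun a b => ¬ a < b) w := by
  rw [List.Chain', List.isChain_iff_getElem]
  constructor
  · intro h i hi
    by_contra hlt
    have hmem : (i + 1) ∈ ASC w := ⟨by omega, by omega, by simpa [List.get_eq_getElem] using hlt⟩
    simp [h] at hmem
  · intro h
    ext i
    simp only [ASC, Set.mem_setOf_eq, Set.mem_empty_iff_false, iff_false]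
    rintro ⟨hlen, hpos, hlt⟩
    obtain ⟨j, rfl⟩ : ∃ j, i = j + 1 := ⟨i - 1, by omega⟩
    have := h j (by omega)
    exact this (by simpa using hlt)

theorem adj_cons {c : X} {w w' : List X} (h : Adj w w') : Adj (c :: w) (c :: w') := by
  cases h with
  | swap u v a b hne hcomp =>
      exact Adj.swap (c :: u) v a b hne hcomp

theorem equiv_cons {c : X} {w w' : List X} (h : Equiv w w') :
    Equiv (c :: w) (c :: w') := by
  induction h with
  | refl => exact Relation.ReflTransGen.refl
  | tail _ hadj ih => exact ih.tail (adj_cons hadj)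

theorem equiv_ins (x : X) (w : List X) : Equiv (x :: w) (ins x w) := by
  induction w with
  | nil => exact Relation.ReflTransGen.refl
  | cons y w ih =>
    by_cases h : x < y
    · rw [ins, if_pos h]
      have step : Adj (x :: y :: w) (y :: x :: w) :=
        Adj.swap [] w x y h.ne (Or.inl h.le)
      exact (Relation.ReflTransGen.single step).trans (equiv_cons ih)
    · rw [ins, if_neg h]
      exact Relation.ReflTransGen.refl

theorem head?_ins (x : X) (w : List X) :
    (ins x w).head? = some x ∨ (ins x w).head? = w.head? := by
  cases w with
  | nil => left; rfl
  | cons y w =>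
    by_cases h : x < y
    · right; rw [ins, if_pos h]; rfl
    · left; rw [ins, if_neg h]; rfl

theorem chain'_ins {x : X} {w : List X}
    (h : List.Chain' (fun a b => ¬ a < b) w) :
    List.Chain' (fun a b => ¬ a < b) (ins x w) := by
  induction w with
  | nil => simp [ins, List.Chain']
  | cons y w ih =>
    rw [List.Chain', List.isChain_cons] at h
    by_cases hxy : x < y
    · rw [ins, if_pos hxy, List.Chain', List.isChain_cons]
      refine ⟨?_, ih h.2⟩
      intro z hz
      rcases head?_ins x w with h' | h'
      · rw [h'] at hz
        simp at hz
        subst hz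
        exact fun hc => absurd (hc.trans hxy) (lt_irrefl _)
      · rw [h'] at hz
        exact h.1 z hz
    · rw [ins, if_neg hxy, List.Chain', List.isChain_cons]
      exact ⟨by intro z hz; simp at hz; subst hz; exact hxy, List.isChain_cons.mpr h⟩

theorem chain'_nf (w : List X) : List.Chain' (fun a b => ¬ a < b) (nf w) := by
  induction w with
  | nil => simp [nf, List.Chain']
  | cons x w ih => exact chain'_ins ih

theorem ins_of_chain' {x : X} {w : List X}
    (h : List.Chain' (fun a b => ¬ a < b) (x :: w)) : ins x w = x :: w := by
  cases w with
  | nil => rfl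
  | cons y w =>
    rw [List.Chain', List.isChain_cons_cons] at h
    rw [ins, if_neg h.1]

theorem nf_of_chain' {w : List X}
    (h : List.Chain' (fun a b => ¬ a < b) w) : nf w = w := by
  induction w with
  | nil => rfl
  | cons x w ih =>
    have : nf (x :: w) = ins x (nf w) := rfl
    rw [this, ih h.tail, ins_of_chain' h]

theorem equiv_nf (w : List X) : Equiv w (nf w) := by
  induction w with
  | nil => exact Relation.ReflTransGen.refl
  | cons x w ih =>
    exact (equiv_cons ih).trans (equiv_ins x (nf w))

theorem ins_comm_lt {a b : X} (hab : a < b) (s : List X) :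
    ins a (ins b s) = ins b (ins a s) := by
  induction s with
  | nil => simp [ins, if_pos hab, if_neg (asymm hab)]
  | cons y s ih =>
    by_cases hb : b < y
    · have ha : a < y := hab.trans hb
      simp [ins, hb, ha, ih]
    · by_cases ha : a < y
      · simp [ins, hb, ha, hab]
      · simp [ins, hb, ha, hab, asymm hab]

theorem ins_comm {a b : X} (hne : a ≠ b) (hcomp : a ≤ b ∨ b ≤ a) (s : List X) :
    ins a (ins b s) = ins b (ins a s) := by
  rcases hcomp with h | h
  · exact ins_comm_lt (lt_of_le_of_ne h hne) s
  · exact (ins_comm_lt (lt_of_le_of_ne h hne.symm) s).symm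

theorem nf_adj {w w' : List X} (h : Adj w w') : nf w = nf w' := by
  cases h with
  | swap u v a b hne hcomp =>
    show (u ++ a :: b :: v).foldr ins [] = (u ++ b :: a :: v).foldr ins []
    rw [List.foldr_append, List.foldr_append]
    congr 1
    exact ins_comm hne hcomp _

theorem nf_equiv {w w' : List X} (h : Equiv w w') : nf w = nf w' := by
  induction h with
  | refl => rfl
  | tail _ hadj ih => exact ih.trans (nf_adj hadj)

end PCM

/-- Each equivalence class of `L(X, ≤)` contains exactly one maximal word. -/
theorem stmt_1 {X : Type*} [PartialOrder X] (w : List X) :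
    ∃! w' : List X, PCM.Equiv w w' ∧ PCM.ASC w' = ∅ := by
  refine ⟨PCM.nf w, ⟨PCM.equiv_nf w, (PCM.asc_empty_iff _).mpr (PCM.chain'_nf w)⟩, ?_⟩
  rintro w' ⟨hequiv, hasc⟩
  have hch := (PCM.asc_empty_iff w').mp hasc
  rw [← PCM.nf_of_chain' hch, PCM.nf_equiv hequiv]
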